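/- arXiv:2303.13341 — 4 statements merged into one kernel-verified Lean document; each statement's English description precedes it below -/
import Mathlib

section
/- For N = 4 with all multiplicities 1, basis v_1,v_2,v_3,v_4 of ℝ^4, splittings V_i = span(v_i) and W_i = span(w_i) where w_1 = v_1+v_2+v_3+v_4, w_2 = v_2+v_3+v_4, w_3 = v_3+v_4, w_4 = v_4, and the pair of admissible topologies T(1)={1,3}, T(2)={2,3}, T(3)={3}, T(4)={4} ≺ T'(i)={i,...,4}: if f ∈ Nil_{T,T'}(V) has matrix entries f v_1 = a v_2 + b v_4, f v_2 = c v_4, f v_3 = d v_4, then g = φ_W⁻¹(φ_V(f)) satisfies g w_1 = (a-1) w_2 + (-a+b+ad) w_4, g w_2 = (c+d-1) w_4, g w_3 = (d-1) w_4. In particular the change of coordinates φ_W⁻¹∘φ_V is not affine in f. -/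
noncomputable section
open Submodule

/-- The standard basis `v₁,…,v₄` of `ℝ⁴`. -/
def vb : Fin 4 → (Fin 4 → ℝ) := fun i => Pi.single i 1

/-- The basis `w₁ = v₁+v₂+v₃+v₄`, `w₂ = v₂+v₃+v₄`, `w₃ = v₃+v₄`, `w₄ = v₄`. -/
def wb : Fin 4 → (Fin 4 → ℝ)
  | 0 => vb 0 + vb 1 + vb 2 + vb 3
  | 1 => vb 1 + vb 2 + vb 3
  | 2 => vb 2 + vb 3
  | 3 => vb 3

/-- For `N = 4`, multiplicities all `1`, splittings `V_i = span v_i`,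
`W_i = span w_i`, and the admissible topologies `T` with atoms `{1,3},{2,3},{3},{4}` and
`T'` with atoms `{i,…,4}`: if `f ∈ Nil_{T,T'}(V)` has `f v₁ = a v₂ + b v₄`,
`f v₂ = c v₄`, `f v₃ = d v₄`, then `g = φ_W⁻¹(φ_V(f))` satisfies
`g w₁ = (a-1) w₂ + (-a+b+ad) w₄`, `g w₂ = (c+d-1) w₄`, `g w₃ = (d-1) w₄`.
In particular the change of coordinates is not affine in `f`. -/
theorem non_affine_change_of_coordinates :
    (∀ (a b c e : ℝ) (f g : Module.End ℝ (Fin 4 → ℝ)),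
      -- `f ∈ Nil_{T,T'}(V)` with the given matrix entries
      f (vb 0) = a • vb 1 + b • vb 3 → f (vb 1) = c • vb 3 →
      f (vb 2) = e • vb 3 → f (vb 3) = 0 →
      -- `g ∈ Nil_{T,T'}(W)`
      g (wb 0) ∈ span ℝ {wb 1, wb 3} → g (wb 1) ∈ span ℝ {wb 3} →
      g (wb 2) ∈ span ℝ {wb 3} → g (wb 3) = 0 →
      -- `φ_W(g) = φ_V(f)`, i.e. `g = φ_W⁻¹(φ_V(f))`
      map (1 + g) (span ℝ {wb 3}) = map (1 + f) (span ℝ {vb 3}) →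
      map (1 + g) (span ℝ {wb 2}) = map (1 + f) (span ℝ {vb 2}) →
      map (1 + g) (span ℝ {wb 1, wb 2}) = map (1 + f) (span ℝ {vb 1, vb 2}) →
      map (1 + g) (span ℝ {wb 0, wb 2}) = map (1 + f) (span ℝ {vb 0, vb 2}) →
      g (wb 0) = (a - 1) • wb 1 + (-a + b + a * e) • wb 3 ∧
        g (wb 1) = (c + e - 1) • wb 3 ∧
        g (wb 2) = (e - 1) • wb 3) ∧
    -- in particular, the coordinate change `(a,b,c,d) ↦ (a-1, -a+b+ad, c+d-1, d-1)`
    -- is not affine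
    ¬ ∃ (A : (Fin 4 → ℝ) →ₗ[ℝ] (Fin 4 → ℝ)) (B : Fin 4 → ℝ),
        ∀ p : Fin 4 → ℝ,
          ![p 0 - 1, -p 0 + p 1 + p 0 * p 3, p 2 + p 3 - 1, p 3 - 1] = A p + B := by
  constructor
  · intro a b c e f g hf0 hf1 hf2 hf3 hg0 hg1 hg2 hg3 h3 h2 h12 h02
    obtain ⟨α, β, hαβ⟩ := Submodule.mem_span_pair.mp hg0
    obtain ⟨γ, hγ⟩ := Submodule.mem_span_singleton.mp hg1
    obtain ⟨δ, hδ⟩ := Submodule.mem_span_singleton.mp hg2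
    -- determine δ
    have m2 : (1 + g) (wb 2) ∈ map (1 + f) (span ℝ {vb 2}) := by
      rw [← h2]; exact mem_map_of_mem (mem_span_singleton_self _)
    rw [map_span, Set.image_singleton, mem_span_singleton] at m2
    obtain ⟨s, hs⟩ := m2
    simp only [LinearMap.add_apply, Module.End.one_apply, hf2, ← hδ] at hs
    have hδe : δ = e - 1 := by
      have c2 := congrFun hs 2
      have c3 := congrFun hs 3
      simp [wb, vb, Pi.single_apply] at c2 c3
      subst c2; linarith
    -- determine γ
    have m1 : (1 + g) (wb 1) ∈ map (1 + f) (span ℝ {vb 1, vb 2}) := by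
      rw [← h12]; exact mem_map_of_mem (subset_span (Set.mem_insert _ _))
    rw [map_span, Set.image_insert_eq, Set.image_singleton, mem_span_pair] at m1
    obtain ⟨s, t, hst⟩ := m1
    simp only [LinearMap.add_apply, Module.End.one_apply, hf1, hf2, ← hγ] at hst
    have hγe : γ = c + e - 1 := by
      have c1 := congrFun hst 1
      have c2 := congrFun hst 2
      have c3 := congrFun hst 3
      simp [wb, vb, Pi.single_apply] at c1 c2 c3
      subst c1; subst c2; linarith
    -- determine α, β
    have m0 : (1 + g) (wb 0) ∈ map (1 + f) (span ℝ {vb 0, vb 2}) := by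
      rw [← h02]; exact mem_map_of_mem (subset_span (Set.mem_insert _ _))
    rw [map_span, Set.image_insert_eq, Set.image_singleton, mem_span_pair] at m0
    obtain ⟨s', t', hst'⟩ := m0
    simp only [LinearMap.add_apply, Module.End.one_apply, hf0, hf2, ← hαβ] at hst'
    have c0 := congrFun hst' 0
    have c1 := congrFun hst' 1
    have c2 := congrFun hst' 2
    have c3 := congrFun hst' 3
    simp [wb, vb, Pi.single_apply] at c0 c1 c2 c3
    have hα : α = a - 1 := by subst c0; linarith
    have hβ : β = -a + b + a * e := by
      subst c0; subst hα
      have ht' : t' = a := by linarith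
      subst ht'; nlinarith [c3]
    refine ⟨?_, ?_, ?_⟩
    · rw [← hαβ, hα, hβ]
    · rw [← hγ, hγe]
    · rw [← hδ, hδe]
  · rintro ⟨A, B, h⟩
    have h0 := congrFun (h 0) 1
    have h1 := congrFun (h ![1, 0, 0, 0]) 1
    have h2 := congrFun (h ![0, 0, 0, 1]) 1
    have h3 := congrFun (h ![1, 0, 0, 1]) 1
    have hadd : (![1, 0, 0, 1] : Fin 4 → ℝ) = ![1, 0, 0, 0] + ![0, 0, 0, 1] := by
      ext i; fin_cases i <;> norm_num
    rw [hadd, map_add] at h3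
    simp at h0 h1 h2 h3
    linarith

end
end

section
/- For N = 3, d = 3, multiplicities d_1=d_2=d_3=1, and the admissible topologies T with atoms {1,3},{2},{3} and T' with atoms {1,2,3},{2,3},{3}: for any two splittings V, W compatible with the same x' ∈ X_{T'}, the change of coordinates φ_W⁻¹∘φ_V : Nil_{T,T'}(V) → Nil_{T,T'}(W) is affine. Explicitly, choosing bases v_i of V_i and w_1 = v_1 + α v_2 + β v_3, w_2 = v_2 + γ v_3, w_3 = v_3 of W_i, if f v_1 = a v_2, f v_2 = b v_3, f v_3 = 0 then g = φ_W⁻¹(φ_V(f)) satisfies g w_1 = (a-α) w_2, g w_2 = (b-γ) w_3, g w_3 = 0. -/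
noncomputable section
open Submodule

/-- For `N = d = 3`, multiplicities all `1`, and the admissible
topologies `T` with atoms `{1,3},{2},{3}` and `T'` with atoms `{1,2,3},{2,3},{3}`:
the change of coordinates between any two compatible splittings is affine.  Explicitly,
with bases `v_i` of `V_i` and `w₁ = v₁ + α v₂ + β v₃`, `w₂ = v₂ + γ v₃`, `w₃ = v₃` of
`W_i`, if `f v₁ = a v₂`, `f v₂ = b v₃`, `f v₃ = 0`, then `g = φ_W⁻¹(φ_V(f))` satisfies
`g w₁ = (a-α) w₂`, `g w₂ = (b-γ) w₃`, `g w₃ = 0`. -/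
theorem dimension_three_affine_change_of_coordinates
    (v : Fin 3 → (Fin 3 → ℝ)) (hv : LinearIndependent ℝ v)
    (hvtop : span ℝ (Set.range v) = ⊤)
    (α β γ a b : ℝ) (w : Fin 3 → (Fin 3 → ℝ))
    (hw0 : w 0 = v 0 + α • v 1 + β • v 2)
    (hw1 : w 1 = v 1 + γ • v 2) (hw2 : w 2 = v 2)
    (f g : Module.End ℝ (Fin 3 → ℝ))
    -- `f ∈ Nil_{T,T'}(V)` with matrix entries `a, b`
    (hf0 : f (v 0) = a • v 1) (hf1 : f (v 1) = b • v 2) (hf2 : f (v 2) = 0)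
    -- `g ∈ Nil_{T,T'}(W)`
    (hg0 : g (w 0) ∈ span ℝ {w 1}) (hg1 : g (w 1) ∈ span ℝ {w 2}) (hg2 : g (w 2) = 0)
    -- `φ_W(g) = φ_V(f)`, over the atoms `{3}`, `{2}`, `{1,3}` of `T`
    (h3 : map (1 + g) (span ℝ {w 2}) = map (1 + f) (span ℝ {v 2}))
    (h2 : map (1 + g) (span ℝ {w 1}) = map (1 + f) (span ℝ {v 1}))
    (h13 : map (1 + g) (span ℝ {w 0, w 2}) = map (1 + f) (span ℝ {v 0, v 2})) :
    g (w 0) = (a - α) • w 1 ∧ g (w 1) = (b - γ) • w 2 ∧ g (w 2) = 0 := by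

  classical
  have hli : ∀ x0 x1 x2 : ℝ, x0 • v 0 + x1 • v 1 + x2 • v 2 = 0 →
      x0 = 0 ∧ x1 = 0 ∧ x2 = 0 := by
    intro x0 x1 x2 h
    have hkey := Fintype.linearIndependent_iff.mp hv ![x0, x1, x2]
    have h' : ∑ i : Fin 3, (![x0, x1, x2]) i • v i = 0 := by
      rw [Fin.sum_univ_three]
      simpa using h
    exact ⟨hkey h' 0, hkey h' 1, hkey h' 2⟩
  obtain ⟨c, hc⟩ := mem_span_singleton.mp hg1
  obtain ⟨s, hs⟩ := mem_span_singleton.mp hg0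
  -- Step 1: determine `c`
  have hmem2 : (1 + g) (w 1) ∈ map (1 + f) (span ℝ {v 1}) := by
    rw [← h2]; exact mem_map_of_mem (mem_span_singleton_self _)
  rw [map_span, Set.image_singleton] at hmem2
  obtain ⟨t, ht⟩ := mem_span_singleton.mp hmem2
  have h1f : (1 + f) (v 1) = v 1 + b • v 2 := by
    simp [LinearMap.add_apply, hf1]
  have h1g : (1 + g) (w 1) = v 1 + (γ + c) • v 2 := by
    have : g (w 1) = c • v 2 := by rw [← hc, hw2]
    rw [LinearMap.add_apply, Module.End.one_apply, this, hw1]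
    module
  rw [h1f, h1g] at ht
  have key1 : (0:ℝ) • v 0 + (t - 1) • v 1 + (t * b - (γ + c)) • v 2 = 0 := by
    have h := sub_eq_zero_of_eq ht
    calc (0:ℝ) • v 0 + (t - 1) • v 1 + (t * b - (γ + c)) • v 2
        = t • (v 1 + b • v 2) - (v 1 + (γ + c) • v 2) := by module
      _ = 0 := h
  obtain ⟨-, ht1, ht2⟩ := hli _ _ _ key1
  have htone : t = 1 := by linarith
  have hcval : c = b - γ := by
    rw [htone] at ht2; linarith
  -- Step 2: determine `s`
  have hmem13 : (1 + g) (w 0) ∈ map (1 + f) (span ℝ {v 0, v 2}) := by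
    rw [← h13]
    exact mem_map_of_mem (subset_span (by simp))
  rw [map_span, Set.image_pair] at hmem13
  obtain ⟨p, q, hpq⟩ := mem_span_pair.mp hmem13
  have h2f0 : (1 + f) (v 0) = v 0 + a • v 1 := by
    simp [LinearMap.add_apply, hf0]
  have h2f2 : (1 + f) (v 2) = v 2 := by
    simp [LinearMap.add_apply, hf2]
  have h2g : (1 + g) (w 0) = v 0 + (α + s) • v 1 + (β + s * γ) • v 2 := by
    have : g (w 0) = s • (v 1 + γ • v 2) := by rw [← hs, hw1]
    rw [LinearMap.add_apply, Module.End.one_apply, this, hw0]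
    module
  rw [h2f0, h2f2, h2g] at hpq
  have key2 : (p - 1) • v 0 + (p * a - (α + s)) • v 1 + (q - (β + s * γ)) • v 2 = 0 := by
    have h := sub_eq_zero_of_eq hpq
    calc (p - 1) • v 0 + (p * a - (α + s)) • v 1 + (q - (β + s * γ)) • v 2
        = (p • (v 0 + a • v 1) + q • v 2) - (v 0 + (α + s) • v 1 + (β + s * γ) • v 2) := by
          module
      _ = 0 := h
  obtain ⟨hp1, hp2, -⟩ := hli _ _ _ key2
  have hpone : p = 1 := by linarith
  have hsval : s = a - α := by rw [hpone] at hp2; linarith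
  refine ⟨?_, ?_, hg2⟩
  · rw [← hs, hsval]
  · rw [← hc, hcval, hw2]

end
end

section
/- For N = 2, multiplicities d_1 = 1, d_2 = 2 in ℝ³, the configuration space X_{T_1} of pairs (L,P) of a line L and a plane P in ℝ³ in general position (L ⊄ P), projected to P, is a fiber bundle over the projective plane homeomorphic to the tangent bundle of P(ℝ³): the map sending (L,P) to the unique tangent vector v at the point L' = P^⊥ ∈ P(ℝ³) with ‖v‖ < π/2 and exp_{L'}(v) = L is a homeomorphism onto the disc bundle of radius π/2, commuting with the projections. -/
noncomputable section
open Submodule Module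

/-- The orthogonal projection onto a subspace of `ℝ³`, as an operator `ℝ³ → ℝ³`. -/
def projOp3 (U : Submodule ℝ (EuclideanSpace ℝ (Fin 3))) :
    EuclideanSpace ℝ (Fin 3) →L[ℝ] EuclideanSpace ℝ (Fin 3) :=
  U.subtypeL.comp (orthogonalProjection U)

/-- The Grassmannian topology on the set of subspaces of `ℝ³`, induced by the
operator-norm distance between orthogonal projections. -/
instance : TopologicalSpace (Submodule ℝ (EuclideanSpace ℝ (Fin 3))) :=
  TopologicalSpace.induced projOp3 inferInstance

/-- The configuration space `X_{T₁}`: pairs `(L, P)` of a line `L` and a plane `P` in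
`ℝ³` in general position (`L + P = ℝ³`, i.e. `L ⊄ P`). -/
def ConfigLP : Type :=
  {q : Submodule ℝ (EuclideanSpace ℝ (Fin 3)) × Submodule ℝ (EuclideanSpace ℝ (Fin 3)) //
    finrank ℝ q.1 = 1 ∧ finrank ℝ q.2 = 2 ∧ q.1 ⊔ q.2 = ⊤}

instance : TopologicalSpace ConfigLP :=
  instTopologicalSpaceSubtype

/-- A model of the tangent bundle of the projective plane `P(ℝ³)`: pairs `(L', A)` of a
line `L'` (a point of `P(ℝ³)`) and an operator `A` with `A = π_{L'ᗮ} ∘ A ∘ π_{L'}`,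
i.e. a linear map `L' → L'ᗮ ≅ T_{L'} P(ℝ³)`. -/
def TangentPR3 : Type :=
  {q : Submodule ℝ (EuclideanSpace ℝ (Fin 3)) ×
      (EuclideanSpace ℝ (Fin 3) →L[ℝ] EuclideanSpace ℝ (Fin 3)) //
    finrank ℝ q.1 = 1 ∧ q.2 = (projOp3 q.1ᗮ).comp (q.2.comp (projOp3 q.1))}

instance : TopologicalSpace TangentPR3 :=
  instTopologicalSpaceSubtype

namespace Cfg14
open RealInnerProductSpace

abbrev E3 : Type := EuclideanSpace ℝ (Fin 3)

lemma projOp3_orthogonal (U : Submodule ℝ E3) : projOp3 Uᗮ = 1 - projOp3 U := by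
  ext x
  simp [projOp3, starProjection_orthogonal_val]

lemma projOp3_span_unit {u : E3} (hu : ‖u‖ = 1) (x : E3) :
    projOp3 (ℝ ∙ u) x = ⟪u, x⟫ • u := by
  simp [projOp3, starProjection_unit_singleton ℝ hu]

lemma projOp3_span (w x : E3) : projOp3 (ℝ ∙ w) x = (⟪w, x⟫ / ‖w‖ ^ 2) • w := by
  simp [projOp3, starProjection_singleton ℝ]

lemma exists_unit_span {L : Submodule ℝ E3} (h : finrank ℝ L = 1) :
    ∃ u : E3, ‖u‖ = 1 ∧ L = ℝ ∙ u := by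
  have : L.IsPrincipal := (Submodule.finrank_le_one_iff_isPrincipal L).mp h.le
  obtain ⟨v, hv⟩ := this
  have hv0 : v ≠ 0 := by
    rintro rfl
    rw [hv] at h
    rw [show ({(0:E3)} : Set E3) = ↑(⊥ : Submodule ℝ E3) by simp, Submodule.span_eq] at h
    simp [finrank_bot] at h
  refine ⟨‖v‖⁻¹ • v, ?_, ?_⟩
  · rw [norm_smul]
    simp [norm_ne_zero_iff.mpr hv0]
  · rw [hv]
    exact (Submodule.span_singleton_smul_eq
      ((isUnit_iff_ne_zero).mpr (inv_ne_zero (norm_ne_zero_iff.mpr hv0))) v).symm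

def tau (T : E3 →L[ℝ] E3) : ℝ := ∑ i, T (EuclideanSpace.single i 1) i

lemma tau_continuous : Continuous tau := by
  refine continuous_finset_sum _ fun i _ => ?_
  exact (EuclideanSpace.proj (𝕜 := ℝ) i).continuous.comp
    (ContinuousLinearMap.apply ℝ E3 (EuclideanSpace.single i 1)).continuous

lemma tau_rankOne {T : E3 →L[ℝ] E3} {v z : E3} (h : ∀ x, T x = ⟪v, x⟫ • z) :
    tau T = ⟪v, z⟫ := by
  have : ∀ i : Fin 3, T (EuclideanSpace.single i 1) i = v i * z i := by
    intro i
    rw [h, EuclideanSpace.inner_single_right]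
    simp
  rw [tau]
  simp only [this]
  rw [PiLp.inner_apply]
  simp [mul_comm]


def fwdA (L P : Submodule ℝ E3) : E3 →L[ℝ] E3 :=
  (tau (projOp3 Pᗮ * projOp3 L * projOp3 Pᗮ))⁻¹ •
    ((1 - projOp3 Pᗮ) * (projOp3 L * projOp3 Pᗮ))

lemma inner_ne_zero_of_sup {L P : Submodule ℝ E3} {u w : E3} (hu : ‖u‖ = 1)
    (hPu : Pᗮ = ℝ ∙ u) (hLw : L = ℝ ∙ w) (hsup : L ⊔ P = ⊤) : ⟪u, w⟫ ≠ 0 := by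
  intro h0
  have hu0 : u ≠ 0 := by intro h; rw [h] at hu; simp at hu
  have huP : u ∈ Pᗮ := by rw [hPu]; exact Submodule.mem_span_singleton_self u
  have : u ∈ (L ⊔ P)ᗮ := by
    rw [Submodule.mem_orthogonal]
    intro y hy
    obtain ⟨a, ha, b, hb, rfl⟩ := Submodule.mem_sup.mp hy
    rw [hLw, Submodule.mem_span_singleton] at ha
    obtain ⟨c, rfl⟩ := ha
    have hb0 : ⟪b, u⟫ = 0 := Submodule.inner_right_of_mem_orthogonal hb huP
    rw [inner_add_left, real_inner_smul_left, real_inner_comm u w, h0, hb0]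
    ring
  rw [hsup, Submodule.top_orthogonal_eq_bot] at this
  exact hu0 (Submodule.mem_bot ℝ |>.mp this)

lemma tau_mid {L P : Submodule ℝ E3} {u w : E3} (hu : ‖u‖ = 1)
    (hPu : Pᗮ = ℝ ∙ u) (hLw : L = ℝ ∙ w) :
    tau (projOp3 Pᗮ * projOp3 L * projOp3 Pᗮ) = ⟪u, w⟫ ^ 2 / ‖w‖ ^ 2 := by
  have hpt : ∀ x, (projOp3 Pᗮ * projOp3 L * projOp3 Pᗮ) x
      = ⟪(⟪u, w⟫ ^ 2 / ‖w‖ ^ 2) • u, x⟫ • u := by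
    intro x
    simp only [ContinuousLinearMap.mul_apply, hPu, hLw, projOp3_span_unit hu,
      projOp3_span, map_smul, real_inner_smul_left, real_inner_smul_right, smul_smul]
    rw [real_inner_comm u w]
    congr 1
    ring
  rw [tau_rankOne hpt, real_inner_smul_left, real_inner_self_eq_norm_sq, hu]
  ring

lemma fwdA_apply {L P : Submodule ℝ E3} {u w : E3} (hu : ‖u‖ = 1)
    (hPu : Pᗮ = ℝ ∙ u) (hLw : L = ℝ ∙ w) (hne : ⟪u, w⟫ ≠ 0) (x : E3) :
    fwdA L P x = ⟪u, x⟫ • ((⟪u, w⟫)⁻¹ • w - u) := by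
  have hw0 : w ≠ 0 := by rintro rfl; simp at hne
  have hnw : (‖w‖ : ℝ) ^ 2 ≠ 0 := pow_ne_zero 2 (norm_ne_zero_iff.mpr hw0)
  rw [fwdA, tau_mid hu hPu hLw]
  simp only [ContinuousLinearMap.smul_apply, ContinuousLinearMap.mul_apply,
    ContinuousLinearMap.sub_apply, ContinuousLinearMap.one_apply, hPu, hLw,
    projOp3_span_unit hu, projOp3_span, map_smul, real_inner_smul_left,
    real_inner_smul_right, smul_smul, smul_sub]
  rw [real_inner_comm u w]
  set a := ⟪u, x⟫ with ha
  set c := ⟪u, w⟫ with hc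
  congr 1
  · congr 1
    field_simp
  · congr 1
    field_simp [hne, hnw]


lemma inner_proj_orthogonal {u : E3} (hu : ‖u‖ = 1) {U : Submodule ℝ E3}
    (hU : U = ℝ ∙ u) (z : E3) : ⟪u, projOp3 Uᗮ z⟫ = 0 := by
  rw [projOp3_orthogonal, ContinuousLinearMap.sub_apply, ContinuousLinearMap.one_apply,
    hU, projOp3_span_unit hu, inner_sub_right, real_inner_smul_right,
    real_inner_self_eq_norm_sq, hu]
  ring

lemma A_inner {L' : Submodule ℝ E3} {A : E3 →L[ℝ] E3} {u : E3} (hu : ‖u‖ = 1)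
    (hL : L' = ℝ ∙ u) (hA : A = (projOp3 L'ᗮ).comp (A.comp (projOp3 L'))) (x : E3) :
    ⟪u, A x⟫ = 0 := by
  conv_lhs => rw [hA]
  exact inner_proj_orthogonal hu hL _

lemma A_pointwise {L' : Submodule ℝ E3} {A : E3 →L[ℝ] E3} {u : E3} (hu : ‖u‖ = 1)
    (hL : L' = ℝ ∙ u) (hA : A = (projOp3 L'ᗮ).comp (A.comp (projOp3 L'))) (x : E3) :
    A x = ⟪u, x⟫ • A u := by
  have hpu : projOp3 L' u = u := by
    rw [hL, projOp3_span_unit hu, real_inner_self_eq_norm_sq, hu]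
    norm_num
  have horth : ∀ z, projOp3 L'ᗮ (A z) = A z := by
    intro z
    rw [projOp3_orthogonal, ContinuousLinearMap.sub_apply, ContinuousLinearMap.one_apply,
      hL, projOp3_span_unit hu, A_inner hu hL hA z]
    simp
  conv_lhs => rw [hA]
  rw [ContinuousLinearMap.comp_apply, ContinuousLinearMap.comp_apply, hL,
    projOp3_span_unit hu, map_smul, ← hL, map_smul, horth]

lemma range_eq_span {B : E3 →L[ℝ] E3} {u w : E3} (hu : ‖u‖ = 1)
    (h : ∀ x, B x = ⟪u, x⟫ • w) : LinearMap.range B.toLinearMap = ℝ ∙ w := by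
  apply le_antisymm
  · rintro _ ⟨x, rfl⟩
    rw [ContinuousLinearMap.coe_coe, h]
    exact Submodule.smul_mem _ _ (Submodule.mem_span_singleton_self w)
  · rw [Submodule.span_singleton_le_iff_mem]
    refine ⟨u, ?_⟩
    rw [ContinuousLinearMap.coe_coe, h, real_inner_self_eq_norm_sq, hu]
    norm_num

lemma finrank_E3 : finrank ℝ E3 = 3 := by simp

def F (x : ConfigLP) : TangentPR3 :=
  ⟨((x.1.2)ᗮ, fwdA x.1.1 x.1.2), by
    obtain ⟨⟨L, P⟩, hL1, hP2, hsup⟩ := x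
    dsimp only at hL1 hP2 hsup ⊢
    have hPperp : finrank ℝ (Pᗮ : Submodule ℝ E3) = 1 := by
      have := Submodule.finrank_add_finrank_orthogonal (K := P)
      rw [hP2] at this
      simp only [finrank_euclideanSpace, Fintype.card_fin] at this
      exact Nat.add_left_cancel (this.trans (by norm_num))
    refine ⟨hPperp, ?_⟩
    obtain ⟨u, hu, hPu⟩ := exists_unit_span hPperp
    obtain ⟨w, hw, hLw⟩ := exists_unit_span hL1
    have hne := inner_ne_zero_of_sup hu hPu hLw hsup
    have hD : ⟪u, (⟪u, w⟫⁻¹ • w - u)⟫ = 0 := by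
      rw [inner_sub_right, real_inner_smul_right, real_inner_self_eq_norm_sq, hu,
        inv_mul_cancel₀ hne]
      norm_num
    ext x
    rw [ContinuousLinearMap.comp_apply, ContinuousLinearMap.comp_apply]
    have hoo : ((Pᗮ)ᗮ : Submodule ℝ E3) = P := Submodule.orthogonal_orthogonal P
    rw [hoo]
    have hproj : ∀ z, projOp3 P z = z - ⟪u, z⟫ • u := by
      intro z
      have h1 : projOp3 P = 1 - projOp3 Pᗮ := by rw [projOp3_orthogonal]; abel
      rw [h1, ContinuousLinearMap.sub_apply, ContinuousLinearMap.one_apply, hPu,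
        projOp3_span_unit hu]
    have hpz : projOp3 Pᗮ x = ⟪u, x⟫ • u := by rw [hPu, projOp3_span_unit hu]
    rw [hpz, map_smul, fwdA_apply hu hPu hLw hne, fwdA_apply hu hPu hLw hne, hproj,
      real_inner_smul_right, real_inner_smul_right, real_inner_self_eq_norm_sq, hu, hD]
    simp⟩

def G (y : TangentPR3) : ConfigLP :=
  ⟨(LinearMap.range (projOp3 y.1.1 + y.1.2).toLinearMap, (y.1.1)ᗮ), by
    obtain ⟨⟨L', A⟩, hL1, hA⟩ := y
    dsimp only at hL1 hA ⊢
    obtain ⟨u, hu, hL⟩ := exists_unit_span hL1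
    have hAx := A_pointwise hu hL hA
    have hAin := A_inner hu hL hA
    have hB : ∀ x, (projOp3 L' + A) x = ⟪u, x⟫ • (u + A u) := by
      intro x
      rw [ContinuousLinearMap.add_apply, hL, projOp3_span_unit hu, hAx, smul_add]
    have hiw : ⟪u, u + A u⟫ = 1 := by
      rw [inner_add_right, hAin, real_inner_self_eq_norm_sq, hu]
      norm_num
    have hw0 : u + A u ≠ 0 := by
      intro h
      rw [h, inner_zero_right] at hiw
      norm_num at hiw
    have hrange := range_eq_span hu hB
    have hAumem : A u ∈ L'ᗮ := by
      rw [hL, Submodule.mem_orthogonal_singleton_iff_inner_left, real_inner_comm, hAin]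
    refine ⟨?_, ?_, ?_⟩
    · rw [hrange]
      exact finrank_span_singleton hw0
    · have := Submodule.finrank_add_finrank_orthogonal (K := L')
      rw [hL1] at this
      simp only [finrank_euclideanSpace, Fintype.card_fin] at this
      exact Nat.add_left_cancel (this.trans (by norm_num))
    · rw [hrange, eq_top_iff, ← Submodule.sup_orthogonal_of_hasOrthogonalProjection (K := L')]
      refine sup_le ?_ le_sup_right
      intro z hz
      rw [hL, Submodule.mem_span_singleton] at hz
      obtain ⟨c, rfl⟩ := hz
      refine Submodule.smul_mem _ _ ?_
      have h1 : u + A u ∈ (ℝ ∙ (u + A u)) ⊔ L'ᗮ :=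
        Submodule.mem_sup_left (Submodule.mem_span_singleton_self _)
      have h2 : A u ∈ (ℝ ∙ (u + A u)) ⊔ L'ᗮ := Submodule.mem_sup_right hAumem
      simpa using Submodule.sub_mem _ h1 h2⟩


lemma G_F (x : ConfigLP) : G (F x) = x := by
  obtain ⟨⟨L, P⟩, hL1, hP2, hsup⟩ := x
  dsimp only at hL1 hP2 hsup
  apply Subtype.ext
  dsimp only [F, G]
  have hPperp : finrank ℝ (Pᗮ : Submodule ℝ E3) = 1 := by
    have := Submodule.finrank_add_finrank_orthogonal (K := P)
    rw [hP2] at this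
    simp only [finrank_euclideanSpace, Fintype.card_fin] at this
    exact Nat.add_left_cancel (this.trans (by norm_num))
  obtain ⟨u, hu, hPu⟩ := exists_unit_span hPperp
  obtain ⟨w, hw, hLw⟩ := exists_unit_span hL1
  have hne := inner_ne_zero_of_sup hu hPu hLw hsup
  have hB : ∀ z, (projOp3 Pᗮ + fwdA L P) z = ⟪u, z⟫ • (⟪u, w⟫⁻¹ • w) := by
    intro z
    rw [ContinuousLinearMap.add_apply, hPu, projOp3_span_unit hu,
      fwdA_apply hu hPu hLw hne, smul_sub]
    abel
  refine Prod.ext_iff.mpr ⟨?_, Submodule.orthogonal_orthogonal P⟩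
  rw [range_eq_span hu hB,
    Submodule.span_singleton_smul_eq (isUnit_iff_ne_zero.mpr (inv_ne_zero hne)) w, hLw]

lemma F_G (y : TangentPR3) : F (G y) = y := by
  obtain ⟨⟨L', A⟩, hL1, hA⟩ := y
  dsimp only at hL1 hA
  apply Subtype.ext
  dsimp only [F, G]
  obtain ⟨u, hu, hL⟩ := exists_unit_span hL1
  have hAx := A_pointwise hu hL hA
  have hAin := A_inner hu hL hA
  have hB : ∀ x, (projOp3 L' + A) x = ⟪u, x⟫ • (u + A u) := by
    intro x
    rw [ContinuousLinearMap.add_apply, hL, projOp3_span_unit hu, hAx, smul_add]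
  have hrange : LinearMap.range (projOp3 L' + A).toLinearMap = ℝ ∙ (u + A u) := range_eq_span hu hB
  have hoo : ((L'ᗮ)ᗮ : Submodule ℝ E3) = L' := Submodule.orthogonal_orthogonal L'
  have hPu : ((L'ᗮ)ᗮ : Submodule ℝ E3) = ℝ ∙ u := hoo.trans hL
  have hiw : ⟪u, u + A u⟫ = 1 := by
    rw [inner_add_right, hAin, real_inner_self_eq_norm_sq, hu]
    norm_num
  have hne : ⟪u, u + A u⟫ ≠ 0 := by rw [hiw]; norm_num
  refine Prod.ext_iff.mpr ⟨hoo, ?_⟩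
  refine ContinuousLinearMap.ext fun x => ?_
  rw [fwdA_apply hu hPu hrange hne x, hiw, hAx x, inv_one, one_smul,
    add_sub_cancel_left]


lemma continuous_projOp3 :
    Continuous (projOp3 : Submodule ℝ E3 → (E3 →L[ℝ] E3)) := continuous_induced_dom

lemma tau_ne_F (x : ConfigLP) :
    tau (projOp3 (x.1.2)ᗮ * projOp3 x.1.1 * projOp3 (x.1.2)ᗮ) ≠ 0 := by
  obtain ⟨⟨L, P⟩, hL1, hP2, hsup⟩ := x
  dsimp only at hL1 hP2 hsup ⊢
  have hPperp : finrank ℝ (Pᗮ : Submodule ℝ E3) = 1 := by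
    have := Submodule.finrank_add_finrank_orthogonal (K := P)
    rw [hP2] at this
    simp only [finrank_euclideanSpace, Fintype.card_fin] at this
    exact Nat.add_left_cancel (this.trans (by norm_num))
  obtain ⟨u, hu, hPu⟩ := exists_unit_span hPperp
  obtain ⟨w, hw, hLw⟩ := exists_unit_span hL1
  have hne := inner_ne_zero_of_sup hu hPu hLw hsup
  have hw0 : w ≠ 0 := by
    intro h
    rw [h, inner_zero_right] at hne
    exact hne rfl
  rw [tau_mid hu hPu hLw]
  exact div_ne_zero (pow_ne_zero 2 hne) (pow_ne_zero 2 (norm_ne_zero_iff.mpr hw0))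

lemma F_continuous : Continuous F := by
  have cval : Continuous fun x : ConfigLP => x.1 := continuous_subtype_val
  have c1 : Continuous fun x : ConfigLP => projOp3 x.1.1 :=
    continuous_projOp3.comp (continuous_fst.comp cval)
  have c2' : Continuous fun x : ConfigLP => projOp3 x.1.2 :=
    continuous_projOp3.comp (continuous_snd.comp cval)
  have c2 : Continuous fun x : ConfigLP => projOp3 (x.1.2)ᗮ := by
    have h : (fun x : ConfigLP => projOp3 (x.1.2)ᗮ) = fun x => 1 - projOp3 x.1.2 :=
      funext fun x => projOp3_orthogonal _
    rw [h]
    exact continuous_const.sub c2'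
  apply Continuous.subtype_mk
  refine Continuous.prodMk ?_ ?_
  · exact continuous_induced_rng.2 c2
  · have cmid : Continuous fun x : ConfigLP =>
        projOp3 (x.1.2)ᗮ * projOp3 x.1.1 * projOp3 (x.1.2)ᗮ := (c2.mul c1).mul c2
    have ctau : Continuous fun x : ConfigLP =>
        (tau (projOp3 (x.1.2)ᗮ * projOp3 x.1.1 * projOp3 (x.1.2)ᗮ))⁻¹ :=
      (tau_continuous.comp cmid).inv₀ tau_ne_F
    exact ctau.smul ((continuous_const.sub c2).mul (c1.mul c2))

def Bop (L' : Submodule ℝ E3) (A : E3 →L[ℝ] E3) : E3 →L[ℝ] E3 :=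
  (projOp3 L' + A) * projOp3 L' * ContinuousLinearMap.adjoint (projOp3 L' + A)

lemma bwd_eq (y : TangentPR3) :
    projOp3 (LinearMap.range (projOp3 y.1.1 + y.1.2).toLinearMap) =
      (tau (Bop y.1.1 y.1.2))⁻¹ • Bop y.1.1 y.1.2 ∧ tau (Bop y.1.1 y.1.2) ≠ 0 := by
  obtain ⟨⟨L', A⟩, hL1, hA⟩ := y
  dsimp only at hL1 hA ⊢
  obtain ⟨u, hu, hL⟩ := exists_unit_span hL1
  have hAx := A_pointwise hu hL hA
  have hAin := A_inner hu hL hA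
  have hB : ∀ x, (projOp3 L' + A) x = ⟪u, x⟫ • (u + A u) := by
    intro x
    rw [ContinuousLinearMap.add_apply, hL, projOp3_span_unit hu, hAx, smul_add]
  have hrange : LinearMap.range (projOp3 L' + A).toLinearMap = ℝ ∙ (u + A u) := range_eq_span hu hB
  have hiw : ⟪u, u + A u⟫ = 1 := by
    rw [inner_add_right, hAin, real_inner_self_eq_norm_sq, hu]
    norm_num
  have hw0 : u + A u ≠ 0 := by
    intro h
    rw [h, inner_zero_right] at hiw
    norm_num at hiw
  have hBu : (projOp3 L' + A) u = u + A u := by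
    rw [hB, real_inner_self_eq_norm_sq, hu]
    norm_num
  have h1 : ∀ z, ⟪u, (ContinuousLinearMap.adjoint (projOp3 L' + A)) z⟫ = ⟪u + A u, z⟫ := by
    intro z
    rw [real_inner_comm, ContinuousLinearMap.adjoint_inner_left, hBu, real_inner_comm]
  have hBop : ∀ z, Bop L' A z = ⟪u + A u, z⟫ • (u + A u) := by
    intro z
    have step : Bop L' A z = (projOp3 L' + A)
        (projOp3 L' ((ContinuousLinearMap.adjoint (projOp3 L' + A)) z)) := rfl
    rw [step]
    have hp : ∀ v, projOp3 L' v = ⟪u, v⟫ • u := by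
      intro v
      rw [hL, projOp3_span_unit hu]
    rw [hp, h1, map_smul, hBu]
  have htau : tau (Bop L' A) = ‖u + A u‖ ^ 2 := by
    rw [tau_rankOne hBop, real_inner_self_eq_norm_sq]
  have hnz : tau (Bop L' A) ≠ 0 := by
    rw [htau]
    exact pow_ne_zero 2 (norm_ne_zero_iff.mpr hw0)
  refine ⟨?_, hnz⟩
  refine ContinuousLinearMap.ext fun z => ?_
  rw [hrange, projOp3_span, ContinuousLinearMap.smul_apply, hBop, htau, smul_smul,
    div_eq_inv_mul]

lemma G_continuous : Continuous G := by
  have cval : Continuous fun y : TangentPR3 => y.1 := continuous_subtype_val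
  have c1 : Continuous fun y : TangentPR3 => projOp3 y.1.1 :=
    continuous_projOp3.comp (continuous_fst.comp cval)
  have cA : Continuous fun y : TangentPR3 => y.1.2 := continuous_snd.comp cval
  have cB : Continuous fun y : TangentPR3 => projOp3 y.1.1 + y.1.2 := c1.add cA
  have cBs : Continuous fun y : TangentPR3 =>
      ContinuousLinearMap.adjoint (projOp3 y.1.1 + y.1.2) :=
    (ContinuousLinearMap.adjoint (𝕜 := ℝ) (E := E3) (F := E3)).continuous.comp cB
  have cBop : Continuous fun y : TangentPR3 => Bop y.1.1 y.1.2 := (cB.mul c1).mul cBs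
  have ctau : Continuous fun y : TangentPR3 => (tau (Bop y.1.1 y.1.2))⁻¹ :=
    (tau_continuous.comp cBop).inv₀ fun y => (bwd_eq y).2
  apply Continuous.subtype_mk
  refine Continuous.prodMk ?_ ?_
  · refine continuous_induced_rng.2 ?_
    show Continuous fun y : TangentPR3 => projOp3 (LinearMap.range (projOp3 y.1.1 + y.1.2).toLinearMap)
    have h : (fun y : TangentPR3 => projOp3 (LinearMap.range (projOp3 y.1.1 + y.1.2).toLinearMap)) =
        fun y => (tau (Bop y.1.1 y.1.2))⁻¹ • Bop y.1.1 y.1.2 := funext fun y => (bwd_eq y).1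
    rw [h]
    exact ctau.smul cBop
  · refine continuous_induced_rng.2 ?_
    show Continuous fun y : TangentPR3 => projOp3 (y.1.1)ᗮ
    have h : (fun y : TangentPR3 => projOp3 (y.1.1)ᗮ) = fun y => 1 - projOp3 y.1.1 :=
      funext fun y => projOp3_orthogonal _
    rw [h]
    exact continuous_const.sub c1

def H : ConfigLP ≃ₜ TangentPR3 :=
  { toFun := F, invFun := G, left_inv := G_F, right_inv := F_G,
    continuous_toFun := F_continuous, continuous_invFun := G_continuous }

end Cfg14

/-- For `N = 2`, multiplicities `d₁ = 1`, `d₂ = 2` in `ℝ³`, the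
configuration space `X_{T₁}` of pairs `(L,P)` in general position, fibered over the
projective plane by `(L,P) ↦ P` (equivalently, over `P(ℝ³)` via `P ↦ P^⊥`), is
homeomorphic to the tangent bundle of `P(ℝ³)` by a homeomorphism commuting with the
projections: `h (L,P)` is a tangent vector at the point `L' = P^⊥ ∈ P(ℝ³)`. -/
theorem configLP_homeomorph_tangent_bundle :
    ∃ h : ConfigLP ≃ₜ TangentPR3,
      ∀ x : ConfigLP, (h x).1.1 = (x.1.2)ᗮ := by
  exact ⟨Cfg14.H, fun x => rfl⟩

end
end

section
/- Let V = (V_1,...,V_N) and E = (E_1,...,E_N) be two splittings of ℝ^d with ⊕_{j≥i}V_j = ⊕_{j≥i}E_j for all i, and suppose additionally each V_i is the orthogonal complement of ⊕_{j>i}E_j inside ⊕_{j≥i}E_j. Then the operator norms of the projections satisfy ‖π_{V_i}‖ ≤ ‖π_{E_i}‖ · ∏_{k<i}(1 + ‖π_{E_k}‖), where π_{V_i}, π_{E_i} are the projections onto V_i, E_i along the complementary sums of the respective splittings. -/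
open Module

section Aux
variable {X : Type*} [NormedAddCommGroup X] [InnerProductSpace ℝ X] {N : ℕ}

private lemma aux_mem_image (W : Fin N → Submodule ℝ X) (hW : iSup W = ⊤)
    (π : X →L[ℝ] X) (i : Fin N)
    (h1 : ∀ v ∈ W i, π v = v) (h0 : ∀ j : Fin N, j ≠ i → ∀ v ∈ W j, π v = 0)
    (x : X) : π x ∈ W i := by
  have hx : x ∈ ⨆ j, W j := hW ▸ Submodule.mem_top
  refine Submodule.iSup_induction W (motive := fun y => π y ∈ W i) hx ?_ ?_ ?_
  · intro j v hv
    by_cases hj : j = i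
    · subst hj; rw [h1 v hv]; exact hv
    · rw [h0 j hj v hv]; exact (W i).zero_mem
  · simp
  · intro a b ha hb; rw [map_add]; exact (W i).add_mem ha hb

private lemma aux_residual (W : Fin N → Submodule ℝ X)
    (π : X →L[ℝ] X) (i : Fin N)
    (h1 : ∀ v ∈ W i, π v = v) (h0 : ∀ j : Fin N, j ≠ i → ∀ v ∈ W j, π v = 0)
    {y : X} (hy : y ∈ ⨆ j ≥ i, W j) : y - π y ∈ ⨆ j > i, W j := by
  refine Submodule.iSup_induction (fun j => ⨆ _ : j ≥ i, W j)
    (motive := fun z => z - π z ∈ ⨆ j > i, W j) hy ?_ ?_ ?_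
  · intro j v hv
    replace hv : v ∈ ⨆ _ : i ≤ j, W j := hv
    by_cases hij : i ≤ j
    · rw [iSup_pos hij] at hv
      rcases eq_or_ne j i with rfl | hj
      · rw [h1 v hv, sub_self]; exact Submodule.zero_mem _
      · rw [h0 j hj v hv, sub_zero]
        exact Submodule.mem_iSup_of_mem j
          (by rw [iSup_pos (lt_of_le_of_ne hij (Ne.symm hj))]; exact hv)
    · rw [iSup_neg hij] at hv
      simp only [Submodule.mem_bot] at hv
      subst hv; simp
  · simp
  · intro a b ha hb
    have : a + b - π (a + b) = (a - π a) + (b - π b) := by rw [map_add]; abel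
    rw [this]; exact Submodule.add_mem _ ha hb
end Aux

set_option maxHeartbeats 1000000 in
/-- Let `V` and `E` be two splittings of `ℝ^d` with
`⊕_{j≥i} V j = ⊕_{j≥i} E j` for all `i`, and suppose each `V i` is the orthogonal
complement of `⊕_{j>i} E j` inside `⊕_{j≥i} E j`.  Then the projections (onto `V i`,
resp. `E i`, along the complementary sums of the respective splittings) satisfy
`‖π_{V_i}‖ ≤ ‖π_{E_i}‖ · ∏_{k<i} (1 + ‖π_{E_k}‖)`. -/
theorem perp_projection_norm_bound {d N : ℕ}
    (V E : Fin N → Submodule ℝ (EuclideanSpace ℝ (Fin d)))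
    (hV : DirectSum.IsInternal V) (hE : DirectSum.IsInternal E)
    (hVE : ∀ i : Fin N, (⨆ j ≥ i, V j) = ⨆ j ≥ i, E j)
    (hperp : ∀ i : Fin N, V i = (⨆ j ≥ i, E j) ⊓ (⨆ j > i, E j)ᗮ)
    (piV piE : Fin N → (EuclideanSpace ℝ (Fin d) →L[ℝ] EuclideanSpace ℝ (Fin d)))
    (hpiV : ∀ i : Fin N, (∀ v ∈ V i, piV i v = v) ∧
      ∀ j : Fin N, j ≠ i → ∀ v ∈ V j, piV i v = 0)
    (hpiE : ∀ i : Fin N, (∀ v ∈ E i, piE i v = v) ∧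
      ∀ j : Fin N, j ≠ i → ∀ v ∈ E j, piE i v = 0) :
    ∀ i : Fin N, ‖piV i‖ ≤ ‖piE i‖ * ∏ k ∈ Finset.Iio i, (1 + ‖piE k‖) := by
  classical
  have hT : ∀ p : Fin N, (⨆ j > p, V j) = ⨆ j > p, E j := by
    intro p
    apply le_antisymm
    · refine iSup₂_le fun j hj => ?_
      have h1 : V j ≤ ⨆ l ≥ j, V l := le_iSup₂ (f := fun l _ => V l) j le_rfl
      rw [hVE j] at h1
      exact h1.trans (iSup₂_le fun l hl =>
        le_iSup₂ (f := fun l _ => E l) l (lt_of_lt_of_le hj hl))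
    · refine iSup₂_le fun j hj => ?_
      have h1 : E j ≤ ⨆ l ≥ j, E l := le_iSup₂ (f := fun l _ => E l) j le_rfl
      rw [← hVE j] at h1
      exact h1.trans (iSup₂_le fun l hl =>
        le_iSup₂ (f := fun l _ => V l) l (lt_of_lt_of_le hj hl))
  have keyD : ∀ (p : Fin N) (y : EuclideanSpace ℝ (Fin d)), y ∈ (⨆ j ≥ p, E j) →
      ‖piV p y‖ ≤ ‖piE p y‖ := by
    intro p y hy
    set v := piV p y with hv
    set e := piE p y with he
    have hvV : v ∈ V p :=
      aux_mem_image V hV.submodule_iSup_eq_top (piV p) p (hpiV p).1 (hpiV p).2 y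
    have hyV : y ∈ ⨆ j ≥ p, V j := by rw [hVE p]; exact hy
    have hres1 : y - v ∈ ⨆ j > p, E j := by
      rw [← hT p]; exact aux_residual V (piV p) p (hpiV p).1 (hpiV p).2 hyV
    have hres2 : y - e ∈ ⨆ j > p, E j :=
      aux_residual E (piE p) p (hpiE p).1 (hpiE p).2 hy
    have hveT : v - e ∈ ⨆ j > p, E j := by
      have hid : v - e = (y - e) - (y - v) := by abel
      rw [hid]; exact Submodule.sub_mem _ hres2 hres1
    have hvperp : v ∈ (⨆ j > p, E j)ᗮ := by
      rw [hperp p] at hvV; exact hvV.2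
    have h0 : (inner ℝ (v - e) v : ℝ) = 0 :=
      (Submodule.mem_orthogonal _ v).mp hvperp (v - e) hveT
    have h2 : ‖v‖ ^ 2 = (inner ℝ e v : ℝ) := by
      have expand : (inner ℝ v v : ℝ) = inner ℝ e v + inner ℝ (v - e) v := by
        rw [← inner_add_left]; congr 1; abel
      rw [real_inner_self_eq_norm_sq] at expand
      rw [expand, h0, add_zero]
    have h3 : (inner ℝ e v : ℝ) ≤ ‖e‖ * ‖v‖ :=
      (le_abs_self _).trans (by simpa [Real.norm_eq_abs] using norm_inner_le_norm (𝕜 := ℝ) e v)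
    nlinarith [norm_nonneg v, norm_nonneg e]
  have hSnF : ∀ p : Fin N, (⨆ j : Fin N, ⨆ _ : p.val ≤ j.val, E j) = ⨆ j ≥ p, E j :=
    fun p => iSup_congr fun j => iSup_congr_Prop Fin.le_def.symm (fun _ => rfl)
  have chain : ∀ k : ℕ, k ≤ N → ∀ x : EuclideanSpace ℝ (Fin d),
      ∃ y, y ∈ (⨆ j : Fin N, ⨆ _ : k ≤ j.val, E j) ∧
        ‖y‖ ≤ (∏ m ∈ Finset.filter (fun m : Fin N => m.val < k) Finset.univ,
          (1 + ‖piE m‖)) * ‖x‖ ∧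
        (∀ i : Fin N, k ≤ i.val → piV i y = piV i x) := by
    intro k
    induction k with
    | zero =>
      intro _ x
      refine ⟨x, ?_, ?_, fun i _ => rfl⟩
      · have htop : (⨆ j : Fin N, ⨆ _ : 0 ≤ j.val, E j) = ⊤ := by
          simpa [Nat.zero_le] using hE.submodule_iSup_eq_top
        rw [htop]; trivial
      · have hempty : Finset.filter (fun m : Fin N => m.val < 0) Finset.univ = ∅ := by
          ext m; simp
        rw [hempty, Finset.prod_empty, one_mul]
    | succ k ih =>
      intro hk x
      have hkN : k < N := hk
      obtain ⟨y, hy1, hy2, hy3⟩ := ih (le_of_lt hkN) x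
      set kF : Fin N := ⟨k, hkN⟩ with hkF
      have hprod : (∏ m ∈ Finset.filter (fun m : Fin N => m.val < k + 1) Finset.univ,
          (1 + ‖piE m‖))
          = (1 + ‖piE kF‖) * ∏ m ∈ Finset.filter (fun m : Fin N => m.val < k) Finset.univ,
            (1 + ‖piE m‖) := by
        have hset : Finset.filter (fun m : Fin N => m.val < k + 1) Finset.univ
            = insert kF (Finset.filter (fun m : Fin N => m.val < k) Finset.univ) := by
          ext m
          simp only [Finset.mem_filter, Finset.mem_univ, true_and, Finset.mem_insert,
            Fin.ext_iff, hkF]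
          omega
        rw [hset, Finset.prod_insert (by simp [hkF])]
      refine ⟨y - piV kF y, ?_, ?_, ?_⟩
      · have hyS : y ∈ ⨆ j ≥ kF, V j := by
          rw [hVE kF, ← hSnF kF]; exact hy1
        have hres := aux_residual V (piV kF) kF (hpiV kF).1 (hpiV kF).2 hyS
        refine (?_ : (⨆ j > kF, V j) ≤ ⨆ j : Fin N, ⨆ _ : k + 1 ≤ j.val, E j) hres
        refine iSup₂_le fun j hj => ?_
        have h1 : V j ≤ ⨆ l ≥ j, V l := le_iSup₂ (f := fun l _ => V l) j le_rfl
        rw [hVE j] at h1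
        refine h1.trans (iSup₂_le fun l hl => ?_)
        refine le_iSup₂ (f := fun (l : Fin N) (_ : k + 1 ≤ l.val) => E l) l ?_
        have hj' : k < j.val := by simpa [hkF, Fin.lt_def] using hj
        have hl' : j.val ≤ l.val := Fin.le_def.mp hl
        omega
      · have hnv : ‖piV kF y‖ ≤ ‖piE kF‖ * ‖y‖ := by
          have h := keyD kF y (by rw [← hSnF kF]; exact hy1)
          exact h.trans ((piE kF).le_opNorm y)
        have hfac : (0:ℝ) ≤ 1 + ‖piE kF‖ := add_nonneg zero_le_one (norm_nonneg _)
        calc ‖y - piV kF y‖ ≤ ‖y‖ + ‖piV kF y‖ := norm_sub_le _ _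
          _ ≤ ‖y‖ + ‖piE kF‖ * ‖y‖ := by linarith
          _ = (1 + ‖piE kF‖) * ‖y‖ := by ring
          _ ≤ (1 + ‖piE kF‖) * ((∏ m ∈ Finset.filter (fun m : Fin N => m.val < k)
              Finset.univ, (1 + ‖piE m‖)) * ‖x‖) := mul_le_mul_of_nonneg_left hy2 hfac
          _ = (∏ m ∈ Finset.filter (fun m : Fin N => m.val < k + 1) Finset.univ,
              (1 + ‖piE m‖)) * ‖x‖ := by rw [hprod]; ring
      · intro i hi
        have hne : kF ≠ i := by
          rw [Ne, Fin.ext_iff, hkF]; simp only; omega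
        have hmem : piV kF y ∈ V kF :=
          aux_mem_image V hV.submodule_iSup_eq_top (piV kF) kF (hpiV kF).1 (hpiV kF).2 y
        have hz : piV i (piV kF y) = 0 := (hpiV i).2 kF hne _ hmem
        rw [map_sub, hz, sub_zero]
        exact hy3 i (by omega)
  intro i
  have hIio : (Finset.Iio i : Finset (Fin N))
      = Finset.filter (fun m : Fin N => m.val < i.val) Finset.univ := by
    ext m
    simp only [Finset.mem_Iio, Finset.mem_filter, Finset.mem_univ, true_and]
    exact Fin.lt_def
  refine ContinuousLinearMap.opNorm_le_bound _
    (mul_nonneg (norm_nonneg _) (Finset.prod_nonneg fun m _ =>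
      add_nonneg zero_le_one (norm_nonneg _))) ?_
  · intro x
    obtain ⟨y, hy1, hy2, hy3⟩ := chain i.val (le_of_lt i.isLt) x
    have h1 : piV i x = piV i y := (hy3 i le_rfl).symm
    have h2 : ‖piV i y‖ ≤ ‖piE i y‖ := keyD i y (by rw [← hSnF i]; exact hy1)
    have h3 : ‖piE i y‖ ≤ ‖piE i‖ * ‖y‖ := (piE i).le_opNorm y
    rw [h1, hIio]
    calc ‖piV i y‖ ≤ ‖piE i‖ * ‖y‖ := h2.trans h3
      _ ≤ ‖piE i‖ * ((∏ m ∈ Finset.filter (fun m : Fin N => m.val < i.val) Finset.univ,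
          (1 + ‖piE m‖)) * ‖x‖) := mul_le_mul_of_nonneg_left hy2 (norm_nonneg _)
      _ = ‖piE i‖ * (∏ m ∈ Finset.filter (fun m : Fin N => m.val < i.val) Finset.univ,
          (1 + ‖piE m‖)) * ‖x‖ := by ring
end
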